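/- The average sensitivity of any nested canalizing function is strictly less than 4/3. -/

import Mathlib

open Finset

/-- Sign encoding of a Boolean value: `true ↦ 1`, `false ↦ -1`. -/
def bsign (a : Bool) : ℝ := if a then 1 else -1

/-- The character `χ_U(x) = ∏_{i ∈ U} x_i` (inputs encoded as Booleans). -/
def chi {n : ℕ} (U : Finset (Fin n)) (x : Fin n → Bool) : ℝ :=
  ∏ i ∈ U, bsign (x i)

/-- Fourier coefficient `f̂(U) = 2^{-n} ∑_x f(x) χ_U(x)`. -/
noncomputable def fhat {n : ℕ} (f : (Fin n → Bool) → ℝ) (U : Finset (Fin n)) : ℝ :=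
  (∑ x : Fin n → Bool, f x * chi U x) / 2 ^ n

/-- `f` is a (±1-valued) Boolean function. -/
def IsBoolean {n : ℕ} (f : (Fin n → Bool) → ℝ) : Prop := ∀ x, f x = 1 ∨ f x = -1

/-- Restriction `f^{(i,a)}` of `f` obtained by fixing the `i`-th input to `a`. -/
def restrict {n : ℕ} (f : (Fin n → Bool) → ℝ) (i : Fin n) (a : Bool) :
    (Fin n → Bool) → ℝ :=
  fun x => f (Function.update x i a)

/-- Variable `i` is relevant for `f`. -/
def relevant {n : ℕ} (f : (Fin n → Bool) → ℝ) (i : Fin n) : Prop :=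
  ∃ x, f x ≠ f (Function.update x i (!(x i)))

/-- Number of relevant variables of `f`. -/
noncomputable def numRel {n : ℕ} (f : (Fin n → Bool) → ℝ) : ℕ :=
  Nat.card {i : Fin n // relevant f i}

/-- Influence `I_i(f) = Pr[f(X) ≠ f(X ⊕ e_i)]` for uniform `X`. -/
noncomputable def influence {n : ℕ} (f : (Fin n → Bool) → ℝ) (i : Fin n) : ℝ :=
  (Nat.card {x : Fin n → Bool // f x ≠ f (Function.update x i (!(x i)))} : ℝ) / 2 ^ n

/-- Average sensitivity `as(f) = ∑_i I_i(f)`. -/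
noncomputable def avgSens {n : ℕ} (f : (Fin n → Bool) → ℝ) : ℝ :=
  ∑ i : Fin n, influence f i

/-- `IsNCFwith f L` : `f` is a nested canalizing function with the nested canalizing
structure recorded by the list `L` of triples `(π(j), α_j, β_j)`: fixing variable
`π(j)` to its canalizing value `α_j` forces the output `β_j`, and the restriction to
the non-canalizing value continues with the rest of the list; the base case is a
constant (±1) function. -/
inductive IsNCFwith : {n : ℕ} → ((Fin n → Bool) → ℝ) → List (Fin n × Bool × ℝ) → Prop where
  | const {n : ℕ} (f : (Fin n → Bool) → ℝ) (b : ℝ) (hb : b = 1 ∨ b = -1)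
      (h : ∀ x, f x = b) : IsNCFwith f []
  | step {n : ℕ} (f : (Fin n → Bool) → ℝ) (i : Fin n) (a : Bool) (b : ℝ)
      (hb : b = 1 ∨ b = -1) (L : List (Fin n × Bool × ℝ))
      (hrel : relevant f i)
      (hcan : ∀ x, x i = a → f x = b)
      (hrest : IsNCFwith (restrict f i (!a)) L) :
      IsNCFwith f ((i, a, b) :: L)

/-- `f` is a nested canalizing function. -/
def IsNCF {n : ℕ} (f : (Fin n → Bool) → ℝ) : Prop := ∃ L, IsNCFwith f L

/-- Variable `i` is most dominant: some nested canalizing ordering starts with `i`. -/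
def MostDominant {n : ℕ} (f : (Fin n → Bool) → ℝ) (i : Fin n) : Prop :=
  ∃ a b L, IsNCFwith f ((i, a, b) :: L)

/-- The canalized output values `β_1, β_2, …` recorded in `L` alternate in sign. -/
def AltBetas {n : ℕ} (L : List (Fin n × Bool × ℝ)) : Prop :=
  List.Chain' (fun p q : Fin n × Bool × ℝ => q.2.2 = -p.2.2) L

noncomputable def prNe {n : ℕ} (f : (Fin n → Bool) → ℝ) (c : ℝ) : ℝ :=
  (Nat.card {x : Fin n → Bool // f x ≠ c} : ℝ) / 2 ^ n

variable {n : ℕ}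

lemma card_split (P : (Fin n → Bool) → Prop) [DecidablePred P] (i : Fin n) (a : Bool) :
    (univ.filter P).card =
      (univ.filter fun x => P x ∧ x i = a).card +
      (univ.filter fun x => P x ∧ x i = !a).card := by
  have h1 : ∀ u : Bool, ¬(u = a) ↔ u = !a := by
    intro u; cases u <;> cases a <;> simp
  rw [← Finset.filter_filter, ← Finset.filter_filter,
    Finset.card_filter_add_card_filter_not (p := fun x => x i = a) |>.symm]
  congr 1
  have h2 : (filter (fun x => ¬ x i = a) (filter P univ)) =
      (filter (fun x => x i = !a) (filter P univ)) := by
    ext x; simp [h1]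
  rw [h2]

lemma card_swap (P : (Fin n → Bool) → Prop) [DecidablePred P] (i : Fin n)
    (hP : ∀ x v, P (Function.update x i v) ↔ P x) (a b : Bool) :
    (univ.filter fun x => P x ∧ x i = a).card =
    (univ.filter fun x => P x ∧ x i = b).card := by
  apply Finset.card_bij' (fun x _ => Function.update x i b) (fun x _ => Function.update x i a)
  · intro x hx
    simp only [mem_filter, mem_univ, true_and] at hx
    rw [Function.update_idem, ← hx.2, Function.update_eq_self]
  · intro x hx
    simp only [mem_filter, mem_univ, true_and] at hx
    rw [Function.update_idem, ← hx.2, Function.update_eq_self]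
  · intro x hx
    simp only [mem_filter, mem_univ, true_and] at hx ⊢
    exact ⟨(hP x b).mpr hx.1, by simp⟩
  · intro x hx
    simp only [mem_filter, mem_univ, true_and] at hx ⊢
    exact ⟨(hP x a).mpr hx.1, by simp⟩

lemma natCard_eq (P : (Fin n → Bool) → Prop) [DecidablePred P] :
    Nat.card {x // P x} = (univ.filter P).card := by
  simp [Nat.card_eq_fintype_card, Fintype.card_subtype]

lemma card_univ_pow : (univ : Finset (Fin n → Bool)).card = 2 ^ n := by
  simp [Finset.card_univ]

lemma natCard_le (P : (Fin n → Bool) → Prop) :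
    Nat.card {x // P x} ≤ 2 ^ n := by
  classical
  rw [natCard_eq]
  calc (univ.filter P).card ≤ (univ : Finset (Fin n → Bool)).card := Finset.card_filter_le _ _
    _ = 2 ^ n := card_univ_pow

lemma prNe_nonneg (f : (Fin n → Bool) → ℝ) (c : ℝ) : 0 ≤ prNe f c := by
  unfold prNe; positivity

lemma prNe_le_one (f : (Fin n → Bool) → ℝ) (c : ℝ) : prNe f c ≤ 1 := by
  rw [prNe, div_le_one (by positivity)]
  exact_mod_cast natCard_le _

lemma influence_nonneg (f : (Fin n → Bool) → ℝ) (i : Fin n) : 0 ≤ influence f i := by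
  unfold influence; positivity

lemma avgSens_nonneg (f : (Fin n → Bool) → ℝ) : 0 ≤ avgSens f :=
  Finset.sum_nonneg fun i _ => influence_nonneg f i

lemma natCard_congr (P Q : (Fin n → Bool) → Prop) (h : ∀ x, P x ↔ Q x) :
    Nat.card {x // P x} = Nat.card {x // Q x} :=
  Nat.card_congr (Equiv.subtypeEquivRight h)

lemma natCard_false (P : (Fin n → Bool) → Prop) (h : ∀ x, ¬ P x) :
    Nat.card {x // P x} = 0 := by
  classical
  rw [natCard_eq]
  rw [Finset.card_eq_zero]
  ext x; simp [h]

section Step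

variable (f : (Fin n → Bool) → ℝ) (i : Fin n) (a : Bool) (b : ℝ)

lemma restrict_indep (x : Fin n → Bool) (v : Bool) :
    restrict f i (!a) (Function.update x i v) = restrict f i (!a) x := by
  simp only [_root_.restrict, Function.update_idem]

lemma bool_ne (x : Fin n → Bool) (hxi : ¬ x i = a) : x i = !a := by
  cases h : x i <;> cases a <;> simp_all

lemma eq_restrict (x : Fin n → Bool) (hxi : x i = !a) :
    f x = restrict f i (!a) x := by
  have h : Function.update x i (!a) = x := by
    rw [← hxi]; exact Function.update_eq_self i x
  show f x = f (Function.update x i (!a))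
  rw [h]

variable (hcan : ∀ x, x i = a → f x = b)

include hcan in
lemma influence_i_eq : influence f i = prNe (restrict f i (!a)) b := by
  rw [influence, prNe]
  congr 2
  apply natCard_congr
  intro x
  by_cases hxi : x i = a
  · rw [hcan x hxi, hxi]
    have : f (Function.update x i (!a)) = restrict f i (!a) x := rfl
    rw [this]
    exact ne_comm
  · have hxi' : x i = !a := bool_ne i a x hxi
    rw [← eq_restrict f i a x hxi', hxi', Bool.not_not]
    rw [hcan (Function.update x i a) (by simp)]

include hcan in
lemma influence_j_eq (j : Fin n) (hj : j ≠ i) :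
    influence f j = influence (restrict f i (!a)) j / 2 := by
  classical
  set g := restrict f i (!a) with hg
  -- independence of g-condition from coordinate i
  have hind : ∀ (x : Fin n → Bool) (v : Bool),
      (g (Function.update x i v) ≠ g (Function.update (Function.update x i v) j
        (!(Function.update x i v j)))) ↔ (g x ≠ g (Function.update x j (!(x j)))) := by
    intro x v
    have h1 : Function.update x i v j = x j := Function.update_of_ne hj _ _
    rw [h1, Function.update_comm (Ne.symm hj), hg, restrict_indep, restrict_indep]
  -- on x i = a the f-condition is false
  have hfa : ∀ x : Fin n → Bool, x i = a →
      ¬ (f x ≠ f (Function.update x j (!(x j)))) := by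
    intro x hxi
    rw [hcan x hxi, hcan _ (by rw [Function.update_of_ne hj.symm]; exact hxi)]
    simp
  -- on x i = !a the f-condition matches the g-condition
  have hfb : ∀ x : Fin n → Bool, x i = !a →
      ((f x ≠ f (Function.update x j (!(x j)))) ↔
        (g x ≠ g (Function.update x j (!(x j))))) := by
    intro x hxi
    rw [eq_restrict f i a x hxi,
      eq_restrict f i a (Function.update x j (!(x j)))
        (by rw [Function.update_of_ne hj.symm]; exact hxi)]
  -- counting
  have key : 2 * Nat.card {x : Fin n → Bool // f x ≠ f (Function.update x j (!(x j)))}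
      = Nat.card {x : Fin n → Bool // g x ≠ g (Function.update x j (!(x j)))} := by
    rw [natCard_eq, natCard_eq]
    rw [card_split (fun x => f x ≠ f (Function.update x j (!(x j)))) i a]
    rw [card_split (fun x => g x ≠ g (Function.update x j (!(x j)))) i a]
    have e1 : (univ.filter fun x => (f x ≠ f (Function.update x j (!(x j)))) ∧ x i = a) = ∅ := by
      ext x
      simp only [mem_filter, mem_univ, true_and, Finset.notMem_empty, iff_false, not_and]
      intro h1 h2
      exact hfa x h2 h1
    have e2 : (univ.filter fun x => (f x ≠ f (Function.update x j (!(x j)))) ∧ x i = !a) =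
        (univ.filter fun x => (g x ≠ g (Function.update x j (!(x j)))) ∧ x i = !a) := by
      ext x
      simp only [mem_filter, mem_univ, true_and]
      constructor
      · rintro ⟨h1, h2⟩; exact ⟨(hfb x h2).mp h1, h2⟩
      · rintro ⟨h1, h2⟩; exact ⟨(hfb x h2).mpr h1, h2⟩
    have e3 : (univ.filter fun x => (g x ≠ g (Function.update x j (!(x j)))) ∧ x i = a).card =
        (univ.filter fun x => (g x ≠ g (Function.update x j (!(x j)))) ∧ x i = !a).card :=
      card_swap _ i hind a (!a)
    rw [e1, e2, e3]
    simp [two_mul]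
  have key' : (2:ℝ) * (Nat.card {x : Fin n → Bool // f x ≠ f (Function.update x j (!(x j)))} : ℝ)
      = (Nat.card {x : Fin n → Bool // g x ≠ g (Function.update x j (!(x j)))} : ℝ) := by
    exact_mod_cast key
  rw [influence, influence, div_div, div_eq_div_iff (by positivity) (by positivity), ← key']
  ring


include hcan in
lemma prNe_step (c : ℝ) :
    prNe f c = (if b = c then 0 else (1:ℝ)/2) + prNe (restrict f i (!a)) c / 2 := by
  classical
  set g := restrict f i (!a) with hg
  have hgind : ∀ (x : Fin n → Bool) (v : Bool),
      (g (Function.update x i v) ≠ c) ↔ (g x ≠ c) := by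
    intro x v; rw [hg, restrict_indep]
  have hfg : ∀ x, x i = !a → f x = g x := fun x hx => by
    rw [hg]; exact eq_restrict f i a x hx
  have hsplitg : (univ.filter fun x => g x ≠ c).card
      = 2 * (univ.filter fun x => (g x ≠ c) ∧ x i = !a).card := by
    rw [card_split (fun x => g x ≠ c) i a, card_swap (fun x => g x ≠ c) i hgind a (!a), two_mul]
  have hsame : (univ.filter fun x => (f x ≠ c) ∧ x i = !a)
      = (univ.filter fun x => (g x ≠ c) ∧ x i = !a) := by
    ext x
    simp only [mem_filter, mem_univ, true_and]
    constructor
    · rintro ⟨h1, h2⟩; exact ⟨by rw [← hfg x h2]; exact h1, h2⟩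
    · rintro ⟨h1, h2⟩; exact ⟨by rw [hfg x h2]; exact h1, h2⟩
  have h2n : (0:ℝ) < 2 ^ n := by positivity
  by_cases hbc : b = c
  · have e1 : (univ.filter fun x => (f x ≠ c) ∧ x i = a) = ∅ := by
      ext x
      simp only [mem_filter, mem_univ, true_and, Finset.notMem_empty, iff_false, not_and]
      intro h1 h2
      exact h1 (by rw [hcan x h2, hbc])
    have key : 2 * Nat.card {x : Fin n → Bool // f x ≠ c}
        = Nat.card {x : Fin n → Bool // g x ≠ c} := by
      rw [natCard_eq, natCard_eq, card_split (fun x => f x ≠ c) i a, e1, hsame, hsplitg]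
      simp
    have key' : (2:ℝ) * (Nat.card {x : Fin n → Bool // f x ≠ c} : ℝ)
        = (Nat.card {x : Fin n → Bool // g x ≠ c} : ℝ) := by exact_mod_cast key
    rw [if_pos hbc, zero_add, prNe, prNe, div_div,
      div_eq_div_iff (by positivity) (by positivity), ← key']
    ring
  · have e1 : (univ.filter fun x => (f x ≠ c) ∧ x i = a)
        = (univ.filter fun x => (True : Prop) ∧ x i = a) := by
      ext x
      simp only [mem_filter, mem_univ, true_and]
      constructor
      · rintro ⟨_, h2⟩; exact h2
      · intro h2; exact ⟨by rw [hcan x h2]; exact hbc, h2⟩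
    have htriv : (univ.filter fun x : Fin n → Bool => (True : Prop) ∧ x i = a).card * 2
        = 2 ^ n := by
      have hs := card_split (fun _ : Fin n → Bool => (True : Prop)) i a
      have hw := card_swap (fun _ : Fin n → Bool => (True : Prop)) i (by simp) a (!a)
      have hu : (univ.filter fun _ : Fin n → Bool => (True : Prop)) = univ := by simp
      rw [hu, card_univ_pow] at hs
      linarith
    have key : 2 * Nat.card {x : Fin n → Bool // f x ≠ c}
        = 2 ^ n + Nat.card {x : Fin n → Bool // g x ≠ c} := by
      rw [natCard_eq, natCard_eq, card_split (fun x => f x ≠ c) i a, e1, hsame, hsplitg]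
      linarith
    have key' : (2:ℝ) * (Nat.card {x : Fin n → Bool // f x ≠ c} : ℝ)
        = 2 ^ n + (Nat.card {x : Fin n → Bool // g x ≠ c} : ℝ) := by exact_mod_cast key
    have hcf : (Nat.card {x : Fin n → Bool // f x ≠ c} : ℝ)
        = (2 ^ n + (Nat.card {x : Fin n → Bool // g x ≠ c} : ℝ)) / 2 := by
      rw [eq_div_iff two_ne_zero, mul_comm]
      exact key'
    rw [if_neg hbc, prNe, prNe]
    set F := (Nat.card {x : Fin n → Bool // f x ≠ c} : ℝ) with hF
    set G := (Nat.card {x : Fin n → Bool // g x ≠ c} : ℝ) with hG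
    rw [hcf]
    field_simp

include hcan in
lemma avgSens_step :
    avgSens f = prNe (restrict f i (!a)) b + avgSens (restrict f i (!a)) / 2 := by
  classical
  have hi0 : influence (restrict f i (!a)) i = 0 := by
    rw [influence, natCard_false]
    · simp
    · intro x h
      exact h ((restrict_indep f i a x (!(x i))).symm)
  have hsum : avgSens f = influence f i + ∑ j ∈ univ.erase i, influence f j := by
    rw [avgSens, ← Finset.add_sum_erase univ _ (mem_univ i)]
  have hsumg : avgSens (restrict f i (!a)) = ∑ j ∈ univ.erase i, influence (restrict f i (!a)) j := by
    rw [avgSens, ← Finset.add_sum_erase univ _ (mem_univ i), hi0, zero_add]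
  rw [hsum, influence_i_eq f i a b hcan, hsumg,
    Finset.sum_congr rfl (fun j hj => influence_j_eq f i a b hcan j (Finset.ne_of_mem_erase hj)),
    ← Finset.sum_div]

end Step

lemma ncf_boolean {f : (Fin n → Bool) → ℝ} {L : List (Fin n × Bool × ℝ)}
    (h : IsNCFwith f L) : IsBoolean f := by
  induction h with
  | const f b hb hcv => intro x; rw [hcv x]; exact hb
  | step f i a b hb L hrel hcan hrest ih =>
    intro x
    by_cases hxi : x i = a
    · rw [hcan x hxi]; exact hb
    · rw [eq_restrict f i a x (bool_ne i a x hxi)]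
      exact ih x

lemma prNe_compl {f : (Fin n → Bool) → ℝ} (hf : IsBoolean f) {b : ℝ}
    (hb : b = 1 ∨ b = -1) : prNe f b + prNe f (-b) = 1 := by
  classical
  have hiff : ∀ x, (f x ≠ -b) ↔ ¬ (f x ≠ b) := by
    intro x
    rcases hf x with h | h <;> rcases hb with h' | h' <;> rw [h, h'] <;> norm_num
  have hkey : Nat.card {x : Fin n → Bool // f x ≠ b} + Nat.card {x : Fin n → Bool // f x ≠ -b}
      = 2 ^ n := by
    rw [natCard_eq, natCard_eq]
    have h2 : (univ.filter fun x => f x ≠ -b) = (univ.filter fun x => ¬ (f x ≠ b)) := by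
      ext x; simp only [mem_filter, mem_univ, true_and]; exact hiff x
    rw [h2, Finset.card_filter_add_card_filter_not, card_univ_pow]
  have h2n : (0:ℝ) < 2 ^ n := by positivity
  rw [prNe, prNe, ← add_div, div_eq_one_iff_eq (ne_of_gt h2n)]
  exact_mod_cast hkey

lemma avgSens_const {f : (Fin n → Bool) → ℝ} {b : ℝ} (h : ∀ x, f x = b) :
    avgSens f = 0 := by
  rw [avgSens]
  apply Finset.sum_eq_zero
  intro i _
  rw [influence, natCard_false, Nat.cast_zero, zero_div]
  intro x hx
  exact hx (by rw [h, h])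

theorem ncf_key {f : (Fin n → Bool) → ℝ} {L : List (Fin n × Bool × ℝ)}
    (h : IsNCFwith f L) :
    avgSens f < 4 / 3 ∧ ∀ c : ℝ, (c = 1 ∨ c = -1) → prNe f c + avgSens f / 2 < 4 / 3 := by
  induction h with
  | const f b hb hcv =>
    have h0 : avgSens f = 0 := avgSens_const hcv
    constructor
    · rw [h0]; norm_num
    · intro c _
      rw [h0]
      have := prNe_le_one f c
      linarith
  | step f i a b hb L hrel hcan hrest ih =>
    have hdec := avgSens_step f i a b hcan
    have hgb : IsBoolean (restrict f i (!a)) := ncf_boolean hrest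
    have hg0 : 0 ≤ avgSens (restrict f i (!a)) := avgSens_nonneg _
    have hgpr : 0 ≤ prNe (restrict f i (!a)) b := prNe_nonneg _ _
    constructor
    · rw [hdec]
      exact ih.2 b hb
    · intro c hc
      have hpr := prNe_step f i a b hcan c
      by_cases hcb : c = b
      · subst hcb
        rw [hpr, if_pos rfl, hdec]
        have h1 := ih.2 c hc
        linarith
      · have hcb' : c = -b := by
          rcases hb with h1 | h1 <;> rcases hc with h2 | h2 <;>
            simp_all
        have hbc : ¬ b = c := fun h => hcb h.symm
        rw [hpr, if_neg hbc, hdec, hcb']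
        have hcompl := prNe_compl hgb hb
        have h1 := ih.1
        linarith


/-- The average sensitivity of any nested canalizing function is less than `4/3`. -/
theorem avgSens_ncf_lt_four_thirds {n : ℕ} (f : (Fin n → Bool) → ℝ)
    (hf : IsNCF f) : avgSens f < 4 / 3 := by
  obtain ⟨L, hL⟩ := hf
  exact (ncf_key hL).1
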